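/- arXiv:2008.09489 — 4 statements merged into one kernel-verified Lean document; each statement's English description precedes it below -/
import Mathlib

section
/- Let G be a group, N a normal subgroup of G, and let π₁, π₂ be irreducible finite-dimensional complex representations of G. If Hom_N(π₁, π₂) ≠ 0, then d_{π₂} · dim Hom_N(π₁, π₁) = d_{π₁} · dim Hom_N(π₁, π₂). -/
variable {G : Type*} [Group G]

/-- A finite-dimensional complex representation is irreducible if it is nonzero and has no
invariant subspace other than `⊥` and `⊤`. -/
def IsIrrep {V : Type*} [AddCommGroup V] [Module ℂ V] (ρ : Representation ℂ G V) : Prop :=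
  Nontrivial V ∧ ∀ p : Submodule ℂ V, (∀ g : G, ∀ v ∈ p, ρ g v ∈ p) → p = ⊥ ∨ p = ⊤

/-- The space of linear maps intertwining the restrictions to a subgroup `H`. -/
def homSpace (H : Subgroup G) {V₁ V₂ : Type*} [AddCommGroup V₁] [Module ℂ V₁]
    [AddCommGroup V₂] [Module ℂ V₂] (ρ₁ : Representation ℂ G V₁)
    (ρ₂ : Representation ℂ G V₂) : Submodule ℂ (V₁ →ₗ[ℂ] V₂) where
  carrier := {f | ∀ h ∈ H, ∀ v, f (ρ₁ h v) = ρ₂ h (f v)}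
  add_mem' := by
    intro f g hf hg h hh v
    simp [hf h hh v, hg h hh v]
  zero_mem' := by intro h hh v; simp
  smul_mem' := by
    intro c f hf h hh v
    simp [hf h hh v]



section Aux
open Module DirectSum
set_option linter.unusedSectionVars false


namespace Stmt1

variable {H : Type*} [Group H]

/-- The space of intertwiners between two representations of `H`. -/
def nHom {X Y : Type*} [AddCommGroup X] [Module ℂ X] [AddCommGroup Y] [Module ℂ Y]
    (σ : Representation ℂ H X) (τ : Representation ℂ H Y) : Submodule ℂ (X →ₗ[ℂ] Y) where
  carrier := {f | ∀ h : H, ∀ x, f (σ h x) = τ h (f x)}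
  add_mem' := by intro f g hf hg h x; simp [hf h x, hg h x]
  zero_mem' := by intro h x; simp
  smul_mem' := by intro c f hf h x; simp [hf h x]

lemma mem_nHom {X Y : Type*} [AddCommGroup X] [Module ℂ X] [AddCommGroup Y] [Module ℂ Y]
    {σ : Representation ℂ H X} {τ : Representation ℂ H Y} {f : X →ₗ[ℂ] Y} :
    f ∈ nHom σ τ ↔ ∀ h : H, ∀ x, f (σ h x) = τ h (f x) := Iff.rfl

/-- Invariance of a subspace under a representation. -/
def SubInv {W : Type*} [AddCommGroup W] [Module ℂ W] (σ : Representation ℂ H W)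
    (p : Submodule ℂ W) : Prop :=
  ∀ h : H, ∀ x ∈ p, σ h x ∈ p

/-- The restriction of a representation to an invariant subspace. -/
def subRep {W : Type*} [AddCommGroup W] [Module ℂ W] (σ : Representation ℂ H W)
    (p : Submodule ℂ W) (hp : SubInv σ p) : Representation ℂ H ↥p where
  toFun h := (σ h).restrict (hp h)
  map_one' := by ext x; simp [LinearMap.restrict_apply]
  map_mul' h h' := by ext x; simp [LinearMap.restrict_apply]

@[simp] lemma subRep_apply {W : Type*} [AddCommGroup W] [Module ℂ W]
    (σ : Representation ℂ H W) (p : Submodule ℂ W) (hp : SubInv σ p) (h : H) (x : ↥p) :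
    (subRep σ p hp h x : W) = σ h (x : W) := rfl

section Split
variable {V W : Type*} [AddCommGroup V] [Module ℂ V] [AddCommGroup W] [Module ℂ W]

lemma coe_sum {r : ℕ} (T : Fin r → Submodule ℂ W) (x : ⨁ i, ↥(T i)) :
    DirectSum.coeLinearMap T x = ∑ j, ((x j : W)) := by
  conv_lhs => rw [← DirectSum.sum_univ_of x]
  rw [map_sum]
  exact Finset.sum_congr rfl fun j _ => DirectSum.coeLinearMap_of T j (x j)

/-- Projections of an internal direct sum decomposition. -/
noncomputable def proj {r : ℕ} (T : Fin r → Submodule ℂ W) (h : DirectSum.IsInternal T)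
    (j : Fin r) : W →ₗ[ℂ] ↥(T j) :=
  (DirectSum.component ℂ (Fin r) (fun i => ↥(T i)) j) ∘ₗ
    (LinearEquiv.ofBijective (DirectSum.coeLinearMap T) h).symm.toLinearMap

lemma sum_proj {r : ℕ} (T : Fin r → Submodule ℂ W) (h : DirectSum.IsInternal T) (w : W) :
    ∑ j, (proj T h j w : W) = w := by
  have h1 : DirectSum.coeLinearMap T
      ((LinearEquiv.ofBijective (DirectSum.coeLinearMap T) h).symm w) = w :=
    (LinearEquiv.ofBijective (DirectSum.coeLinearMap T) h).apply_symm_apply w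
  conv_rhs => rw [← h1]
  rw [coe_sum]
  rfl

lemma proj_coe {r : ℕ} (T : Fin r → Submodule ℂ W) (h : DirectSum.IsInternal T)
    (i j : Fin r) (x : ↥(T i)) :
    (proj T h j (x : W) : W) = if i = j then (x : W) else 0 := by
  have h1 : (LinearEquiv.ofBijective (DirectSum.coeLinearMap T) h).symm (x : W)
      = DirectSum.of (fun i => ↥(T i)) i x := by
    apply (LinearEquiv.ofBijective (DirectSum.coeLinearMap T) h).injective
    simp [LinearEquiv.ofBijective_apply, DirectSum.coeLinearMap_of]
    exact (DirectSum.coeLinearMap_of T i x).symm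
  simp only [proj, LinearMap.comp_apply, LinearEquiv.coe_coe, h1]
  rw [← DirectSum.apply_eq_component]
  rcases eq_or_ne i j with rfl | hne
  · rw [DirectSum.of_eq_same, if_pos rfl]
  · rw [DirectSum.of_eq_of_ne _ _ _ hne.symm, if_neg hne]
    rfl

end Split
section Split2
variable {V W : Type*} [AddCommGroup V] [Module ℂ V] [AddCommGroup W] [Module ℂ W]
  [FiniteDimensional ℂ V] [FiniteDimensional ℂ W]

lemma proj_equivariant {r : ℕ} (τ : Representation ℂ H W) (T : Fin r → Submodule ℂ W)
    (hinv : ∀ i, SubInv τ (T i)) (h : DirectSum.IsInternal T) (j : Fin r) (g : H) (w : W) :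
    proj T h j (τ g w) = subRep τ (T j) (hinv j) g (proj T h j w) := by
  have hw : τ g w = ∑ i, τ g ((proj T h i w : W)) := by
    rw [← map_sum, sum_proj]
  rw [hw, map_sum]
  have key : ∀ i, proj T h j (τ g ((proj T h i w : W)))
      = if i = j then subRep τ (T j) (hinv j) g (proj T h j w) else 0 := by
    intro i
    have hmem : τ g ((proj T h i w : W)) ∈ T i := hinv i g _ (proj T h i w).2
    have hcoe : τ g ((proj T h i w : W)) = ((⟨τ g ((proj T h i w : W)), hmem⟩ : ↥(T i)) : W) :=
      rfl
    rcases eq_or_ne i j with rfl | hne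
    · rw [if_pos rfl]
      ext
      rw [hcoe, proj_coe T h i i, if_pos rfl]
      rfl
    · rw [if_neg hne]
      ext
      rw [hcoe, proj_coe T h i j, if_neg hne]
      rfl
  rw [Finset.sum_congr rfl fun i _ => key i]
  simp

/-- Additivity of intertwiner spaces in the target over an internal direct sum. -/
noncomputable def nHomPiEquiv (σ : Representation ℂ H V) (τ : Representation ℂ H W)
    {r : ℕ} (T : Fin r → Submodule ℂ W) (hinv : ∀ i, SubInv τ (T i))
    (hind : iSupIndep T) (htop : ⨆ i, T i = ⊤) :
    ↥(nHom σ τ) ≃ₗ[ℂ] ∀ j, ↥(nHom σ (subRep τ (T j) (hinv j))) := by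
  have h : DirectSum.IsInternal T :=
    (DirectSum.isInternal_submodule_iff_iSupIndep_and_iSup_eq_top T).mpr ⟨hind, htop⟩
  have mem1 : ∀ (f : ↥(nHom σ τ)) (j : Fin r),
      proj T h j ∘ₗ (f : V →ₗ[ℂ] W) ∈ nHom σ (subRep τ (T j) (hinv j)) := by
    intro f j g x
    simp only [LinearMap.comp_apply]
    rw [f.2 g x, proj_equivariant τ T hinv h j]
  have mem2 : ∀ (F : ∀ j, ↥(nHom σ (subRep τ (T j) (hinv j)))),
      (∑ j, (T j).subtype ∘ₗ ((F j : V →ₗ[ℂ] ↥(T j)))) ∈ nHom σ τ := by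
    intro F g x
    simp only [LinearMap.sum_apply, LinearMap.comp_apply, Submodule.coe_subtype]
    rw [map_sum]
    refine Finset.sum_congr rfl fun j _ => ?_
    rw [(F j).2 g x]
    rfl
  exact
  { toFun := fun f j => ⟨proj T h j ∘ₗ (f : V →ₗ[ℂ] W), mem1 f j⟩
    invFun := fun F => ⟨∑ j, (T j).subtype ∘ₗ ((F j : V →ₗ[ℂ] ↥(T j))), mem2 F⟩
    map_add' := by
      intro f g
      funext j
      refine Subtype.ext (LinearMap.ext fun x => ?_)
      simp
    map_smul' := by
      intro c f
      funext j
      refine Subtype.ext (LinearMap.ext fun x => ?_)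
      simp
    left_inv := by
      intro f
      refine Subtype.ext (LinearMap.ext fun x => ?_)
      simp only [LinearMap.sum_apply, LinearMap.comp_apply, Submodule.coe_subtype]
      exact sum_proj T h ((f : V →ₗ[ℂ] W) x)
    right_inv := by
      intro F
      funext j
      refine Subtype.ext (LinearMap.ext fun x => Subtype.ext ?_)
      simp only [LinearMap.comp_apply, LinearMap.sum_apply, Submodule.coe_subtype]
      rw [map_sum, AddSubmonoidClass.coe_finset_sum]
      have key : ∀ i, (proj T h j (((F i : V →ₗ[ℂ] ↥(T i)) x : W)) : W)
          = if i = j then ((F j : V →ₗ[ℂ] ↥(T j)) x : W) else 0 := by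
        intro i
        rw [proj_coe T h i j]
        split <;> rename_i hij
        · subst hij; rfl
        · rfl
      rw [Finset.sum_congr rfl fun i _ => key i]
      simp }

lemma finrank_nHom_eq_sum (σ : Representation ℂ H V) (τ : Representation ℂ H W)
    {r : ℕ} (T : Fin r → Submodule ℂ W) (hinv : ∀ i, SubInv τ (T i))
    (hind : iSupIndep T) (htop : ⨆ i, T i = ⊤) :
    finrank ℂ ↥(nHom σ τ) = ∑ j, finrank ℂ ↥(nHom σ (subRep τ (T j) (hinv j))) := by
  rw [(nHomPiEquiv σ τ T hinv hind htop).finrank_eq]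
  exact Module.finrank_pi_fintype ℂ

end Split2
section Group
variable {Γ : Type*} [Group Γ] {N : Subgroup Γ} [N.Normal]
variable {V : Type*} [AddCommGroup V] [Module ℂ V]

lemma rep_injective (ρ : Representation ℂ Γ V) (g : Γ) : Function.Injective (ρ g) := by
  intro x y hxy
  have h := congrArg (ρ g⁻¹) hxy
  simpa only [← Module.End.mul_apply, ← map_mul, inv_mul_cancel, map_one,
    Module.End.one_apply] using h

lemma map_rep_map (ρ : Representation ℂ Γ V) (g h : Γ) (p : Submodule ℂ V) :
    (p.map (ρ g)).map (ρ h) = p.map (ρ (h * g)) := by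
  rw [← Submodule.map_comp, ← Module.End.mul_eq_comp, ← map_mul]

lemma map_rep_one (ρ : Representation ℂ Γ V) (p : Submodule ℂ V) :
    p.map (ρ 1) = p := by
  rw [map_one]
  exact Submodule.map_id p

/-- `e` intertwines `σ` with the `g`-twist of `τ`. -/
def IsTwist (N : Subgroup Γ) [N.Normal] (g : Γ) {X Y : Type*} [AddCommGroup X] [Module ℂ X]
    [AddCommGroup Y] [Module ℂ Y] (σ : Representation ℂ N X) (τ : Representation ℂ N Y)
    (e : X ≃ₗ[ℂ] Y) : Prop :=
  ∀ (n : N) (x : X), e (σ n x) = τ (MulAut.conjNormal g n) (e x)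

lemma IsTwist.trans {g g' : Γ} {X Y Z : Type*} [AddCommGroup X] [Module ℂ X]
    [AddCommGroup Y] [Module ℂ Y] [AddCommGroup Z] [Module ℂ Z]
    {σ : Representation ℂ N X} {τ : Representation ℂ N Y} {υ : Representation ℂ N Z}
    {e : X ≃ₗ[ℂ] Y} {e' : Y ≃ₗ[ℂ] Z} (h : IsTwist N g σ τ e) (h' : IsTwist N g' τ υ e') :
    IsTwist N (g' * g) σ υ (e.trans e') := by
  intro n x
  simp only [LinearEquiv.trans_apply, h n x, h' (MulAut.conjNormal g n) (e x), map_mul,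
    MulAut.mul_apply]

section N

variable (N) in
/-- Restriction of a `Γ`-representation to the subgroup `N`. -/
def resN (ρ : Representation ℂ Γ V) : Representation ℂ N V := ρ.comp N.subtype

@[simp] lemma resN_apply (ρ : Representation ℂ Γ V) (n : N) (v : V) :
    resN N ρ n v = ρ (n : Γ) v := rfl

lemma subInv_map (ρ : Representation ℂ Γ V) (g : Γ) {p : Submodule ℂ V}
    (hp : SubInv (resN N ρ) p) : SubInv (resN N ρ) (p.map (ρ g)) := by
  rintro n x hx
  obtain ⟨y, hy, rfl⟩ := hx
  have hg : (n : Γ) * g = g * ((MulAut.conjNormal g).symm n : N) := by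
    rw [MulAut.conjNormal_symm_apply]
    group
  have hstep : (resN N ρ) n (ρ g y) = ρ g (ρ (((MulAut.conjNormal g).symm n : N) : Γ) y) := by
    rw [resN_apply, ← Module.End.mul_apply, ← map_mul, hg, map_mul, Module.End.mul_apply]
  rw [hstep]
  have := hp ((MulAut.conjNormal g).symm n) y hy
  rw [resN_apply] at this
  exact Submodule.mem_map_of_mem this

lemma subInv_iSup (σ : Representation ℂ N V) {ι : Sort*} {T : ι → Submodule ℂ V}
    (hT : ∀ i, SubInv σ (T i)) : SubInv σ (⨆ i, T i) := by
  intro n x hx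
  have : Submodule.map (σ n) (⨆ i, T i) ≤ ⨆ i, T i := by
    rw [Submodule.map_iSup]
    refine iSup_le fun i => ?_
    refine le_trans ?_ (le_iSup T i)
    rintro y ⟨z, hz, rfl⟩
    exact hT i n z hz
  exact this (Submodule.mem_map_of_mem hx)

lemma subInv_inf (σ : Representation ℂ N V) {p q : Submodule ℂ V}
    (hp : SubInv σ p) (hq : SubInv σ q) : SubInv σ (p ⊓ q) :=
  fun n x hx => ⟨hp n x hx.1, hq n x hx.2⟩

lemma simple_map (ρ : Representation ℂ Γ V) (g : Γ) {S : Submodule ℂ V}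
    (hsimp : ∀ p ≤ S, SubInv (resN N ρ) p → p = ⊥ ∨ p = S) :
    ∀ p ≤ S.map (ρ g), SubInv (resN N ρ) p → p = ⊥ ∨ p = S.map (ρ g) := by
  intro p hle hinv
  have h1 : p.map (ρ g⁻¹) ≤ S := by
    have := Submodule.map_mono (f := ρ g⁻¹) hle
    rwa [map_rep_map, inv_mul_cancel, map_rep_one] at this
  rcases hsimp _ h1 (subInv_map ρ g⁻¹ hinv) with h | h
  · left
    have := congrArg (Submodule.map (ρ g)) h
    rwa [map_rep_map, mul_inv_cancel, map_rep_one, Submodule.map_bot] at this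
  · right
    have := congrArg (Submodule.map (ρ g)) h
    rwa [map_rep_map, mul_inv_cancel, map_rep_one] at this

/-- The canonical twisted isomorphism from an invariant subspace to its `g`-translate. -/
noncomputable def twistEquiv (ρ : Representation ℂ Γ V) (g : Γ) (p : Submodule ℂ V) :
    ↥p ≃ₗ[ℂ] ↥(p.map (ρ g)) :=
  Submodule.equivMapOfInjective (ρ g) (rep_injective ρ g) p

lemma isTwist_twistEquiv (ρ : Representation ℂ Γ V) (g : Γ) (p : Submodule ℂ V)
    (hp : SubInv (resN N ρ) p) :
    IsTwist N g (subRep (resN N ρ) p hp) (subRep (resN N ρ) (p.map (ρ g)) (subInv_map ρ g hp))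
      (twistEquiv ρ g p) := by
  intro n x
  refine Subtype.ext ?_
  have hg : g * (n : Γ) = ((MulAut.conjNormal g n : N) : Γ) * g := by
    rw [MulAut.conjNormal_apply]
    group
  simp only [twistEquiv, Submodule.coe_equivMapOfInjective_apply, subRep_apply, resN_apply]
  rw [← Module.End.mul_apply, ← map_mul, hg, map_mul, Module.End.mul_apply]

end N
end Group
section Group2
variable {Γ : Type*} [Group Γ] {N : Subgroup Γ} [N.Normal]
variable {V : Type*} [AddCommGroup V] [Module ℂ V]

/-- Intertwiner spaces into twisted targets have the same dimension
(here the source carries a full `Γ`-action). -/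
noncomputable def nHomTwistEquiv (ρ : Representation ℂ Γ V) (g : Γ)
    {X Y : Type*} [AddCommGroup X] [Module ℂ X] [AddCommGroup Y] [Module ℂ Y]
    (σ : Representation ℂ N X) (τ : Representation ℂ N Y) (e : X ≃ₗ[ℂ] Y)
    (he : IsTwist N g σ τ e) :
    ↥(nHom (resN N ρ) τ) ≃ₗ[ℂ] ↥(nHom (resN N ρ) σ) := by
  have esymm : ∀ (n : N) (y : Y), e.symm (τ (MulAut.conjNormal g n) y) = σ n (e.symm y) := by
    intro n y
    apply e.injective
    rw [e.apply_symm_apply, he n (e.symm y), e.apply_symm_apply]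
  have mem1 : ∀ (f : ↥(nHom (resN N ρ) τ)),
      e.symm.toLinearMap ∘ₗ (f : V →ₗ[ℂ] Y) ∘ₗ (ρ g) ∈ nHom (resN N ρ) σ := by
    intro f n x
    have hg : g * (n : Γ) = ((MulAut.conjNormal g n : N) : Γ) * g := by
      rw [MulAut.conjNormal_apply]; group
    simp only [LinearMap.comp_apply, LinearEquiv.coe_coe, resN_apply]
    rw [← Module.End.mul_apply, ← map_mul, hg, map_mul, Module.End.mul_apply]
    have hf := f.2 (MulAut.conjNormal g n) (ρ g x)
    rw [resN_apply] at hf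
    rw [hf, esymm]
  have mem2 : ∀ (f : ↥(nHom (resN N ρ) σ)),
      e.toLinearMap ∘ₗ (f : V →ₗ[ℂ] X) ∘ₗ (ρ g⁻¹) ∈ nHom (resN N ρ) τ := by
    intro f n x
    set m : N := (MulAut.conjNormal g).symm n with hm
    have hg : g⁻¹ * (n : Γ) = (m : Γ) * g⁻¹ := by
      rw [hm, MulAut.conjNormal_symm_apply]; group
    simp only [LinearMap.comp_apply, LinearEquiv.coe_coe, resN_apply]
    rw [← Module.End.mul_apply, ← map_mul, hg, map_mul, Module.End.mul_apply]
    have hf := f.2 m (ρ g⁻¹ x)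
    rw [resN_apply] at hf
    rw [hf]
    have := he m ((f : V →ₗ[ℂ] X) (ρ g⁻¹ x))
    rw [this]
    congr 2
    exact (MulAut.conjNormal g).apply_symm_apply n
  refine
  { toFun := fun f => ⟨e.symm.toLinearMap ∘ₗ (f : V →ₗ[ℂ] Y) ∘ₗ (ρ g), mem1 f⟩
    invFun := fun f => ⟨e.toLinearMap ∘ₗ (f : V →ₗ[ℂ] X) ∘ₗ (ρ g⁻¹), mem2 f⟩
    map_add' := by intro f₁ f₂; refine Subtype.ext (LinearMap.ext fun x => ?_); simp
    map_smul' := by intro c f; refine Subtype.ext (LinearMap.ext fun x => ?_); simp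
    left_inv := by
      intro f
      refine Subtype.ext (LinearMap.ext fun x => ?_)
      simp only [LinearMap.comp_apply, LinearEquiv.coe_coe, LinearEquiv.apply_symm_apply]
      rw [← Module.End.mul_apply, ← map_mul, mul_inv_cancel, map_one, Module.End.one_apply]
    right_inv := by
      intro f
      refine Subtype.ext (LinearMap.ext fun x => ?_)
      simp only [LinearMap.comp_apply, LinearEquiv.coe_coe, LinearEquiv.symm_apply_apply]
      rw [← Module.End.mul_apply, ← map_mul, inv_mul_cancel, map_one, Module.End.one_apply] }

end Group2

section Cons
variable {V : Type*} [AddCommGroup V] [Module ℂ V]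

lemma iSup_fin_cons {r : ℕ} (S : Submodule ℂ V) (T : Fin r → Submodule ℂ V) :
    (⨆ i, (Fin.cons S T : Fin (r + 1) → Submodule ℂ V) i) = S ⊔ ⨆ i, T i := by
  apply le_antisymm
  · refine iSup_le fun i => ?_
    refine Fin.cases ?_ ?_ i
    · simp
    · intro k
      simp only [Fin.cons_succ]
      exact le_sup_of_le_right (le_iSup T k)
  · refine sup_le ?_ (iSup_le fun k => ?_)
    · exact le_iSup_of_le 0 (by simp)
    · exact le_iSup_of_le k.succ (by simp)

lemma iSupIndep_fin_cons {r : ℕ} {S : Submodule ℂ V} {T : Fin r → Submodule ℂ V}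
    (hT : iSupIndep T) (hd : Disjoint S (⨆ i, T i)) :
    iSupIndep (Fin.cons S T : Fin (r + 1) → Submodule ℂ V) := by
  intro i
  refine Fin.cases ?_ ?_ i
  · refine Disjoint.mono_right ?_ (by simpa using hd)
    refine iSup₂_le fun j => ?_
    refine Fin.cases (fun h => absurd rfl h) (fun k _ => ?_) j
    simp only [Fin.cons_succ]
    exact le_iSup T k
  · intro k
    have hle : (⨆ j, ⨆ (_ : j ≠ k.succ), (Fin.cons S T : Fin (r + 1) → Submodule ℂ V) j)
        ≤ S ⊔ ⨆ j, ⨆ (_ : j ≠ k), T j := by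
      refine iSup₂_le fun j => ?_
      refine Fin.cases (fun _ => ?_) (fun m hm => ?_) j
      · simp only [Fin.cons_zero]
        exact le_sup_left
      · have hmk : m ≠ k := fun h => hm (by rw [h])
        simp only [Fin.cons_succ]
        exact le_sup_of_le_right (le_iSup₂ (f := fun j (_ : j ≠ k) => T j) m hmk)
    refine Disjoint.mono_right hle ?_
    simp only [Fin.cons_succ]
    rw [Submodule.disjoint_def]
    intro x hxk hxsup
    obtain ⟨s, hs, y, hy, hxy⟩ := Submodule.mem_sup.mp hxsup
    have hyT : y ∈ ⨆ i, T i :=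
      (iSup₂_le fun j _ => le_iSup T j : (⨆ j, ⨆ (_ : j ≠ k), T j) ≤ ⨆ i, T i) hy
    have hs0 : s = 0 := by
      have hsT : s ∈ ⨆ i, T i := by
        have hsxy : s = x - y := by rw [← hxy]; abel
        rw [hsxy]
        exact Submodule.sub_mem _ (le_iSup T k hxk) hyT
      exact (Submodule.disjoint_def.mp hd) s hs hsT
    have hxyy : x = y := by rw [← hxy, hs0, zero_add]
    subst hxyy
    exact (Submodule.disjoint_def.mp (hT k)) x hxk hy

end Cons
section Exists
variable {H : Type*} [Group H]
variable {W : Type*} [AddCommGroup W] [Module ℂ W] [FiniteDimensional ℂ W]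

/-- Every nonzero finite-dimensional representation has a minimal nonzero invariant subspace. -/
lemma exists_simple_sub [Nontrivial W] (σ : Representation ℂ H W) :
    ∃ S : Submodule ℂ W, SubInv σ S ∧ S ≠ ⊥ ∧
      ∀ p ≤ S, SubInv σ p → p = ⊥ ∨ p = S := by
  classical
  set A : Set ℕ := {n | ∃ p : Submodule ℂ W, SubInv σ p ∧ p ≠ ⊥ ∧ finrank ℂ ↥p = n} with hA
  have hne : A.Nonempty := ⟨finrank ℂ ↥(⊤ : Submodule ℂ W),
    ⊤, fun h x _ => Submodule.mem_top, by simp, rfl⟩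
  obtain ⟨S, hSinv, hSne, hSrank⟩ := Nat.sInf_mem hne
  refine ⟨S, hSinv, hSne, fun p hle hpinv => ?_⟩
  rcases eq_or_ne p ⊥ with h | h
  · exact Or.inl h
  · right
    have hmem : finrank ℂ ↥p ∈ A := ⟨p, hpinv, h, rfl⟩
    have h1 : finrank ℂ ↥S ≤ finrank ℂ ↥p := hSrank ▸ Nat.sInf_le hmem
    exact Submodule.eq_of_le_of_finrank_le hle h1

end Exists

section Decomp
variable {Γ : Type*} [Group Γ] {N : Subgroup Γ} [N.Normal]
variable {V : Type*} [AddCommGroup V] [Module ℂ V] [FiniteDimensional ℂ V]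

lemma sup_conj_eq_top (ρ : Representation ℂ Γ V)
    (hirr : ∀ p : Submodule ℂ V, (∀ g : Γ, ∀ v ∈ p, ρ g v ∈ p) → p = ⊥ ∨ p = ⊤)
    {S : Submodule ℂ V} (hSne : S ≠ ⊥) :
    (⨆ g : Γ, S.map (ρ g)) = ⊤ := by
  have hGinv : ∀ g : Γ, ∀ v ∈ ⨆ h : Γ, S.map (ρ h), ρ g v ∈ ⨆ h : Γ, S.map (ρ h) := by
    intro g v hv
    have hle : Submodule.map (ρ g) (⨆ h : Γ, S.map (ρ h)) ≤ ⨆ h : Γ, S.map (ρ h) := by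
      rw [Submodule.map_iSup]
      refine iSup_le fun h => ?_
      rw [map_rep_map]
      exact le_iSup (fun h : Γ => S.map (ρ h)) (g * h)
    exact hle (Submodule.mem_map_of_mem hv)
  rcases hirr _ hGinv with h | h
  · exfalso
    apply hSne
    have : S ≤ ⨆ h : Γ, S.map (ρ h) := by
      refine le_trans ?_ (le_iSup (fun h : Γ => S.map (ρ h)) 1)
      rw [map_rep_one]
    rw [h, le_bot_iff] at this
    exact this
  · exact h

/-- Clifford-style decomposition: an irreducible `Γ`-representation is an (internal) direct
sum of `Γ`-translates of any given minimal invariant subspace for a normal subgroup. -/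
lemma exists_decomp (ρ : Representation ℂ Γ V)
    (hirr : ∀ p : Submodule ℂ V, (∀ g : Γ, ∀ v ∈ p, ρ g v ∈ p) → p = ⊥ ∨ p = ⊤)
    {S : Submodule ℂ V} (hS : SubInv (resN N ρ) S) (hSne : S ≠ ⊥)
    (hSsimple : ∀ p ≤ S, SubInv (resN N ρ) p → p = ⊥ ∨ p = S) :
    ∃ (r : ℕ) (c : Fin r → Γ),
      iSupIndep (fun i => S.map (ρ (c i))) ∧ (⨆ i, S.map (ρ (c i))) = ⊤ := by
  classical
  set A : Set ℕ := {n | ∃ (r : ℕ) (c : Fin r → Γ),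
    iSupIndep (fun i => S.map (ρ (c i))) ∧ n = finrank ℂ ↥(⨆ i, S.map (ρ (c i)))} with hA
  have hne : A.Nonempty :=
    ⟨_, 0, Fin.elim0, fun i => i.elim0, rfl⟩
  have hbdd : BddAbove A := by
    refine ⟨finrank ℂ V, fun n hn => ?_⟩
    obtain ⟨r, c, _, rfl⟩ := hn
    exact Submodule.finrank_le _
  obtain ⟨r, c, hind, hrank⟩ := Nat.sSup_mem hne hbdd
  refine ⟨r, c, hind, ?_⟩
  by_contra hne'
  have hex : ∃ g : Γ, ¬ S.map (ρ g) ≤ ⨆ i, S.map (ρ (c i)) := by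
    by_contra hall
    push_neg at hall
    apply hne'
    have := sup_conj_eq_top ρ hirr hSne
    exact top_unique (this ▸ iSup_le hall)
  obtain ⟨g, hg⟩ := hex
  set D := S.map (ρ g) with hD
  set P := ⨆ i, S.map (ρ (c i)) with hP
  have hPinv : SubInv (resN N ρ) P := subInv_iSup _ fun i => subInv_map ρ (c i) hS
  have hDinv : SubInv (resN N ρ) D := subInv_map ρ g hS
  have hdisj : Disjoint D P := by
    rcases simple_map ρ g hSsimple (D ⊓ P) inf_le_left (subInv_inf _ hDinv hPinv) with h | h
    · exact disjoint_iff.mpr h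
    · exfalso
      exact hg (inf_eq_left.mp h)
  have hDne : D ≠ ⊥ := by
    intro h
    apply hSne
    have h2 := congrArg (Submodule.map (ρ g⁻¹)) h
    rwa [map_rep_map, inv_mul_cancel, map_rep_one, Submodule.map_bot] at h2
  -- extended family
  set c' : Fin (r + 1) → Γ := Fin.cons g c with hc'
  have hfam : (fun i => S.map (ρ (c' i))) = Fin.cons D (fun i => S.map (ρ (c i))) := by
    funext i
    refine Fin.cases ?_ ?_ i <;> simp [hc', hD]
  have hind' : iSupIndep (fun i => S.map (ρ (c' i))) := by
    rw [hfam]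
    exact iSupIndep_fin_cons hind hdisj
  have hsup' : (⨆ i, S.map (ρ (c' i))) = D ⊔ P := by
    rw [hfam, iSup_fin_cons]
  have hmem : finrank ℂ ↥(D ⊔ P) ∈ A := ⟨r + 1, c', hind', by rw [hsup']⟩
  have hgt : finrank ℂ ↥P < finrank ℂ ↥(D ⊔ P) := by
    have h1 : finrank ℂ ↥(D ⊔ P) + finrank ℂ ↥(D ⊓ P) = finrank ℂ ↥D + finrank ℂ ↥P :=
      Submodule.finrank_sup_add_finrank_inf_eq D P
    rw [hdisj.eq_bot] at h1
    simp only [finrank_bot, add_zero] at h1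
    have hDpos : 0 < finrank ℂ ↥D := by
      rcases Nat.eq_zero_or_pos (finrank ℂ ↥D) with h | h
      · exact absurd (Submodule.finrank_eq_zero.mp h) hDne
      · exact h
    omega
  have : finrank ℂ ↥(D ⊔ P) ≤ sSup A := le_csSup hbdd hmem
  rw [← hrank] at hgt
  omega

end Decomp
end Stmt1

open Module Stmt1 in
/-- if `Hom_N(π₁, π₂) ≠ 0` then
`d_{π₂} · dim Hom_N(π₁, π₁) = d_{π₁} · dim Hom_N(π₁, π₂)`. -/
theorem stmt1 {V₁ V₂ : Type*} [AddCommGroup V₁] [Module ℂ V₁] [FiniteDimensional ℂ V₁]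
    [AddCommGroup V₂] [Module ℂ V₂] [FiniteDimensional ℂ V₂]
    (N : Subgroup G) [N.Normal]
    (ρ₁ : Representation ℂ G V₁) (ρ₂ : Representation ℂ G V₂)
    (h₁ : IsIrrep ρ₁) (h₂ : IsIrrep ρ₂)
    (hne : homSpace N ρ₁ ρ₂ ≠ ⊥) :
    Module.finrank ℂ V₂ * Module.finrank ℂ (homSpace N ρ₁ ρ₁) =
      Module.finrank ℂ V₁ * Module.finrank ℂ (homSpace N ρ₁ ρ₂) := by
  classical
  obtain ⟨hnt₁, hirr₁⟩ := h₁
  obtain ⟨hnt₂, hirr₂⟩ := h₂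
  -- identification of the two descriptions of intertwiner spaces
  have hhs₁ : homSpace N ρ₁ ρ₁ = nHom (resN N ρ₁) (resN N ρ₁) :=
    Submodule.ext fun f => ⟨fun hf n x => hf ↑n n.2 x, fun hf h hh x => hf ⟨h, hh⟩ x⟩
  have hhs₂ : homSpace N ρ₁ ρ₂ = nHom (resN N ρ₁) (resN N ρ₂) :=
    Submodule.ext fun f => ⟨fun hf n x => hf ↑n n.2 x, fun hf h hh x => hf ⟨h, hh⟩ x⟩
  -- a minimal invariant subspace of V₁
  obtain ⟨S, hSinv, hSne, hSsimple⟩ := exists_simple_sub (resN N ρ₁)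
  -- decomposition of V₁ into conjugates of S
  obtain ⟨r, c, hind₁, htop₁⟩ := exists_decomp (N := N) ρ₁ hirr₁ hSinv hSne hSsimple
  set T : Fin r → Submodule ℂ V₁ := fun i => S.map (ρ₁ (c i)) with hT
  have hinvT : ∀ i, SubInv (resN N ρ₁) (T i) := fun i => subInv_map ρ₁ (c i) hSinv
  set dσ := finrank ℂ ↥S with hdσ
  set f := finrank ℂ ↥(nHom (resN N ρ₁) (subRep (resN N ρ₁) S hSinv)) with hf
  -- dimension of Hom_N(V₁, V₁)
  have hH11 : finrank ℂ ↥(homSpace N ρ₁ ρ₁) = r * f := by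
    rw [hhs₁, finrank_nHom_eq_sum (resN N ρ₁) (resN N ρ₁) T hinvT hind₁ htop₁]
    have : ∀ i, finrank ℂ ↥(nHom (resN N ρ₁) (subRep (resN N ρ₁) (T i) (hinvT i))) = f := by
      intro i
      rw [hf]
      exact (nHomTwistEquiv ρ₁ (c i) _ _ (twistEquiv ρ₁ (c i) S)
        (isTwist_twistEquiv ρ₁ (c i) S hSinv)).finrank_eq
    rw [Finset.sum_congr rfl fun i _ => this i]
    simp [mul_comm]
  -- dimension of V₁
  have hd₁ : finrank ℂ V₁ = r * dσ := by
    have hInternal : DirectSum.IsInternal T :=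
      (DirectSum.isInternal_submodule_iff_iSupIndep_and_iSup_eq_top T).mpr ⟨hind₁, htop₁⟩
    have h1 : finrank ℂ V₁ = finrank ℂ (⨁ i, ↥(T i)) :=
      (LinearEquiv.ofBijective (DirectSum.coeLinearMap T) hInternal).symm.finrank_eq
    rw [h1, finrank_directSum]
    have : ∀ i, finrank ℂ ↥(T i) = dσ := fun i => (twistEquiv ρ₁ (c i) S).finrank_eq.symm
    rw [Finset.sum_congr rfl fun i _ => this i]
    simp [mul_comm]
  -- a nonzero intertwiner
  rw [Submodule.ne_bot_iff] at hne
  obtain ⟨φ, hφmem, hφne⟩ := hne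
  have hφ : ∀ (n : N) (v : V₁), φ (ρ₁ ↑n v) = ρ₂ ↑n (φ v) := fun n v => hφmem ↑n n.2 v
  -- a conjugate of S mapped injectively into V₂
  have hex : ∃ g₀ : G, (S.map (ρ₁ g₀)).map φ ≠ ⊥ := by
    by_contra hall
    push_neg at hall
    apply hφne
    have h1 : Submodule.map φ ⊤ = ⊥ := by
      rw [← sup_conj_eq_top ρ₁ hirr₁ hSne, Submodule.map_iSup]
      simp only [hall, iSup_bot]
    rw [Submodule.map_top] at h1
    exact LinearMap.range_eq_bot.mp h1
  obtain ⟨g₀, hU0ne⟩ := hex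
  set T0 : Submodule ℂ V₁ := S.map (ρ₁ g₀) with hT0
  have hT0inv : SubInv (resN N ρ₁) T0 := subInv_map ρ₁ g₀ hSinv
  have hT0simple := simple_map (N := N) ρ₁ g₀ hSsimple
  set U0 : Submodule ℂ V₂ := T0.map φ with hU0
  have hU0inv : SubInv (resN N ρ₂) U0 := by
    rintro n x ⟨y, hy, rfl⟩
    have h2 := hφ n y
    rw [resN_apply, ← h2]
    exact Submodule.mem_map_of_mem (hT0inv n y hy)
  have hkerinv : SubInv (resN N ρ₁) (LinearMap.ker φ) := by
    intro n x hx
    rw [LinearMap.mem_ker, resN_apply, hφ n x, LinearMap.mem_ker.mp hx, map_zero]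
  have hker : T0 ⊓ LinearMap.ker φ = ⊥ := by
    rcases hT0simple (T0 ⊓ LinearMap.ker φ) inf_le_left
      (subInv_inf _ hT0inv hkerinv) with h | h
    · exact h
    · exfalso
      apply hU0ne
      have hle : T0 ≤ LinearMap.ker φ := inf_eq_left.mp h
      rw [Submodule.eq_bot_iff]
      rintro x ⟨y, hy, rfl⟩
      exact LinearMap.mem_ker.mp (hle hy)
  have hU0simple : ∀ p ≤ U0, SubInv (resN N ρ₂) p → p = ⊥ ∨ p = U0 := by
    intro p hple hpinv
    have hcomapinv : SubInv (resN N ρ₁) (Submodule.comap φ p) := by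
      intro n x hx
      simp only [Submodule.mem_comap, resN_apply] at hx ⊢
      rw [hφ n x]
      exact hpinv n _ hx
    rcases hT0simple (T0 ⊓ Submodule.comap φ p) inf_le_left
      (subInv_inf _ hT0inv hcomapinv) with h | h
    · left
      rw [Submodule.eq_bot_iff]
      intro x hx
      obtain ⟨t, ht, rfl⟩ := hple hx
      have htq : t ∈ T0 ⊓ Submodule.comap φ p := ⟨ht, hx⟩
      rw [h] at htq
      rw [(Submodule.mem_bot ℂ).mp htq, map_zero]
    · right
      refine le_antisymm hple ?_
      exact Submodule.map_le_iff_le_comap.mpr (inf_eq_left.mp h)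
  -- the equivariant isomorphism T0 ≃ U0
  have hrestr : ∀ x ∈ T0, φ x ∈ U0 := fun x hx => Submodule.mem_map_of_mem hx
  set f0 : ↥T0 →ₗ[ℂ] ↥U0 := φ.restrict hrestr with hf0
  have hf0bij : Function.Bijective f0 := by
    constructor
    · intro x y hxy
      have h3 : φ (x : V₁) = φ (y : V₁) := by
        have := congrArg (Subtype.val) hxy
        simpa [hf0, LinearMap.restrict_apply] using this
      have h4 : ((x : V₁) - y) ∈ T0 ⊓ LinearMap.ker φ :=
        ⟨Submodule.sub_mem _ x.2 y.2, by simp [LinearMap.mem_ker, map_sub, h3]⟩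
      rw [hker, Submodule.mem_bot] at h4
      exact Subtype.ext (by linear_combination (norm := abel) h4)
    · rintro ⟨u, hu⟩
      obtain ⟨t, ht, htu⟩ := hu
      exact ⟨⟨t, ht⟩, Subtype.ext (by simpa [hf0, LinearMap.restrict_apply] using htu)⟩
  set e0 : ↥T0 ≃ₗ[ℂ] ↥U0 := LinearEquiv.ofBijective f0 hf0bij with he0
  have htw0 : IsTwist N 1 (subRep (resN N ρ₁) T0 hT0inv) (subRep (resN N ρ₂) U0 hU0inv) e0 := by
    intro n x
    refine Subtype.ext ?_
    have hcn : (MulAut.conjNormal (1 : G)) n = n := by rw [map_one]; rfl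
    rw [hcn]
    simpa [he0, hf0, LinearMap.restrict_apply] using hφ n (x : V₁)
  -- decomposition of V₂ into conjugates of U0
  obtain ⟨s, cc, hind₂, htop₂⟩ := exists_decomp (N := N) ρ₂ hirr₂ hU0inv hU0ne hU0simple
  set U : Fin s → Submodule ℂ V₂ := fun j => U0.map (ρ₂ (cc j)) with hU
  have hinvU : ∀ j, SubInv (resN N ρ₂) (U j) := fun j => subInv_map ρ₂ (cc j) hU0inv
  -- twist chain from S to U j
  have htwS0 : IsTwist N g₀ (subRep (resN N ρ₁) S hSinv) (subRep (resN N ρ₁) T0 hT0inv)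
      (twistEquiv ρ₁ g₀ S) := isTwist_twistEquiv ρ₁ g₀ S hSinv
  have htwU : ∀ j, IsTwist N (cc j * (1 * g₀)) (subRep (resN N ρ₁) S hSinv)
      (subRep (resN N ρ₂) (U j) (hinvU j))
      (((twistEquiv ρ₁ g₀ S).trans e0).trans (twistEquiv ρ₂ (cc j) U0)) := fun j =>
    (htwS0.trans htw0).trans (isTwist_twistEquiv ρ₂ (cc j) U0 hU0inv)
  -- dimension of Hom_N(V₁, V₂)
  have hH12 : finrank ℂ ↥(homSpace N ρ₁ ρ₂) = s * f := by
    rw [hhs₂, finrank_nHom_eq_sum (resN N ρ₁) (resN N ρ₂) U hinvU hind₂ htop₂]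
    have : ∀ j, finrank ℂ ↥(nHom (resN N ρ₁) (subRep (resN N ρ₂) (U j) (hinvU j))) = f := by
      intro j
      rw [hf]
      exact (nHomTwistEquiv ρ₁ (cc j * (1 * g₀)) _ _ _ (htwU j)).finrank_eq
    rw [Finset.sum_congr rfl fun j _ => this j]
    simp [mul_comm]
  -- dimension of V₂
  have hd₂ : finrank ℂ V₂ = s * dσ := by
    have hInternal : DirectSum.IsInternal U :=
      (DirectSum.isInternal_submodule_iff_iSupIndep_and_iSup_eq_top U).mpr ⟨hind₂, htop₂⟩
    have h1 : finrank ℂ V₂ = finrank ℂ (⨁ j, ↥(U j)) :=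
      (LinearEquiv.ofBijective (DirectSum.coeLinearMap U) hInternal).symm.finrank_eq
    rw [h1, finrank_directSum]
    have : ∀ j, finrank ℂ ↥(U j) = dσ := fun j =>
      ((((twistEquiv ρ₁ g₀ S).trans e0).trans (twistEquiv ρ₂ (cc j) U0)).finrank_eq).symm
    rw [Finset.sum_congr rfl fun j _ => this j]
    simp [mul_comm]
  rw [hH11, hH12, hd₁, hd₂]
  ring

end Aux
end

section
/- Let G be a group and (U_m)_{m≥0} a decreasing sequence of normal subgroups of G. For irreducible finite-dimensional complex representations π₁, π₂, π₃ of G, define dist(π_i, π_j) ∈ ℕ ∪ {∞} as the smallest m ≥ 0 such that Hom_{U_m}(π_i, π_j) ≠ 0 (and ∞ if no such m exists). Then dist(π₁, π₃) ≤ max(dist(π₁, π₂), dist(π₂, π₃)). -/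
variable {G : Type*} [Group G]

/-AUX-/
lemma homSpace_mono {H H' : Subgroup G} (hle : H' ≤ H) {V₁ V₂ : Type*} [AddCommGroup V₁]
    [Module ℂ V₁] [AddCommGroup V₂] [Module ℂ V₂] (ρ₁ : Representation ℂ G V₁)
    (ρ₂ : Representation ℂ G V₂) : homSpace H ρ₁ ρ₂ ≤ homSpace H' ρ₁ ρ₂ :=
  fun _ hf h hh v => hf h (hle hh) v

lemma key {V₁ V₂ V₃ : Type*} [AddCommGroup V₁] [Module ℂ V₁]
    [AddCommGroup V₂] [Module ℂ V₂] [AddCommGroup V₃] [Module ℂ V₃]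
    (H : Subgroup G) (hH : H.Normal)
    (ρ₁ : Representation ℂ G V₁) (ρ₂ : Representation ℂ G V₂) (ρ₃ : Representation ℂ G V₃)
    (h₂ : IsIrrep ρ₂)
    (h12 : homSpace H ρ₁ ρ₂ ≠ ⊥) (h23 : homSpace H ρ₂ ρ₃ ≠ ⊥) :
    homSpace H ρ₁ ρ₃ ≠ ⊥ := by
  obtain ⟨f, hf, hf0⟩ := (Submodule.ne_bot_iff _).mp h12
  obtain ⟨g, hg, hg0⟩ := (Submodule.ne_bot_iff _).mp h23
  -- for each x, T x is a U-intertwiner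
  set T : G → (V₁ →ₗ[ℂ] V₃) := fun x => ρ₃ x⁻¹ ∘ₗ g ∘ₗ ρ₂ x ∘ₗ f with hT
  have hTmem : ∀ x : G, T x ∈ homSpace H ρ₁ ρ₃ := by
    intro x h hh v
    have hconj : x * h * x⁻¹ ∈ H := hH.conj_mem h hh x
    simp only [hT, LinearMap.comp_apply]
    rw [hf h hh v]
    have e1 : ρ₂ x (ρ₂ h (f v)) = ρ₂ (x * h * x⁻¹) (ρ₂ x (f v)) := by
      rw [← Module.End.mul_apply, ← Module.End.mul_apply, ← map_mul, ← map_mul]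
      group
    rw [e1, hg _ hconj]
    rw [← Module.End.mul_apply (ρ₃ x⁻¹), ← map_mul, ← Module.End.mul_apply (ρ₃ h), ← map_mul]
    group
  -- some T x is nonzero
  have hTne : ∃ x : G, T x ≠ 0 := by
    by_contra hall
    push_neg at hall
    have hzero : ∀ (x : G) (v : V₁), g (ρ₂ x (f v)) = 0 := by
      intro x v
      have := congrFun (congrArg DFunLike.coe (hall x)) v
      simp only [hT, LinearMap.comp_apply, LinearMap.zero_apply] at this
      have := congrArg (ρ₃ x) this
      rwa [← Module.End.mul_apply, ← map_mul, mul_inv_cancel, map_one, Module.End.one_apply,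
        map_zero] at this
    set S : Set V₂ := {w | ∃ x : G, ∃ v : V₁, ρ₂ x (f v) = w} with hS
    set W : Submodule ℂ V₂ := Submodule.span ℂ S with hW
    have hWinv : ∀ y : G, ∀ w ∈ W, ρ₂ y w ∈ W := by
      intro y w hw
      induction hw using Submodule.span_induction with
      | mem w hwS =>
        obtain ⟨x, v, rfl⟩ := hwS
        apply Submodule.subset_span
        exact ⟨y * x, v, by rw [map_mul, Module.End.mul_apply]⟩
      | zero => simp
      | add a b _ _ ha hb => rw [map_add]; exact W.add_mem ha hb
      | smul c a _ ha => rw [map_smul]; exact W.smul_mem c ha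
    have hWne : W ≠ ⊥ := by
      have : ∃ v, f v ≠ 0 := by
        by_contra h0
        push_neg at h0
        exact hf0 (LinearMap.ext fun v => h0 v)
      obtain ⟨v, hv⟩ := this
      intro hWbot
      have : f v ∈ W := Submodule.subset_span ⟨1, v, by simp⟩
      rw [hWbot, Submodule.mem_bot] at this
      exact hv this
    have hWtop : W = ⊤ := (h₂.2 W hWinv).resolve_left hWne
    have : g = 0 := by
      have hker : W ≤ LinearMap.ker g := Submodule.span_le.mpr (by
        rintro w ⟨x, v, rfl⟩
        exact hzero x v)
      ext v
      have : v ∈ W := hWtop ▸ Submodule.mem_top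
      simpa using hker this
    exact hg0 this
  obtain ⟨x, hx⟩ := hTne
  exact (Submodule.ne_bot_iff _).mpr ⟨T x, hTmem x, hx⟩

/-- The distance `dist(π₁, π₂) ∈ ℕ ∪ {∞}`: the smallest `m ≥ 0` with
`Hom_{U_m}(π₁, π₂) ≠ 0`, and `∞` if there is no such `m`. -/
noncomputable def distRep (U : ℕ → Subgroup G) {V₁ V₂ : Type*} [AddCommGroup V₁] [Module ℂ V₁]
    [AddCommGroup V₂] [Module ℂ V₂] (ρ₁ : Representation ℂ G V₁)
    (ρ₂ : Representation ℂ G V₂) : ℕ∞ :=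
  sInf {x : ℕ∞ | ∃ m : ℕ, x = m ∧ homSpace (U m) ρ₁ ρ₂ ≠ ⊥}

/-- the ultrametric inequality for `dist`. -/
theorem stmt3 {V₁ V₂ V₃ : Type*} [AddCommGroup V₁] [Module ℂ V₁] [FiniteDimensional ℂ V₁]
    [AddCommGroup V₂] [Module ℂ V₂] [FiniteDimensional ℂ V₂]
    [AddCommGroup V₃] [Module ℂ V₃] [FiniteDimensional ℂ V₃]
    (U : ℕ → Subgroup G) (hU : Antitone U) (hUnormal : ∀ m, (U m).Normal)
    (ρ₁ : Representation ℂ G V₁) (ρ₂ : Representation ℂ G V₂) (ρ₃ : Representation ℂ G V₃)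
    (h₁ : IsIrrep ρ₁) (h₂ : IsIrrep ρ₂) (h₃ : IsIrrep ρ₃) :
    distRep U ρ₁ ρ₃ ≤ max (distRep U ρ₁ ρ₂) (distRep U ρ₂ ρ₃) := by
  classical
  by_cases hS12 : ∃ m : ℕ, homSpace (U m) ρ₁ ρ₂ ≠ ⊥
  · by_cases hS23 : ∃ m : ℕ, homSpace (U m) ρ₂ ρ₃ ≠ ⊥
    · set m₁ := Nat.find hS12 with hm₁
      set m₂ := Nat.find hS23 with hm₂
      have hd12 : distRep U ρ₁ ρ₂ = (m₁ : ℕ∞) := by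
        apply le_antisymm
        · exact sInf_le ⟨m₁, rfl, Nat.find_spec hS12⟩
        · apply le_sInf
          rintro x ⟨m, rfl, hm⟩
          exact_mod_cast Nat.find_min' hS12 hm
      have hd23 : distRep U ρ₂ ρ₃ = (m₂ : ℕ∞) := by
        apply le_antisymm
        · exact sInf_le ⟨m₂, rfl, Nat.find_spec hS23⟩
        · apply le_sInf
          rintro x ⟨m, rfl, hm⟩
          exact_mod_cast Nat.find_min' hS23 hm
      have h12n : homSpace (U (max m₁ m₂)) ρ₁ ρ₂ ≠ ⊥ := by
        intro hbot
        have hle := homSpace_mono (hU (le_max_left m₁ m₂)) ρ₁ ρ₂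
        rw [hbot] at hle
        exact Nat.find_spec hS12 (le_bot_iff.mp hle)
      have h23n : homSpace (U (max m₁ m₂)) ρ₂ ρ₃ ≠ ⊥ := by
        intro hbot
        have hle := homSpace_mono (hU (le_max_right m₁ m₂)) ρ₂ ρ₃
        rw [hbot] at hle
        exact Nat.find_spec hS23 (le_bot_iff.mp hle)
      have h13n := key (U (max m₁ m₂)) (hUnormal _) ρ₁ ρ₂ ρ₃ h₂ h12n h23n
      calc distRep U ρ₁ ρ₃ ≤ ((max m₁ m₂ : ℕ) : ℕ∞) := sInf_le ⟨max m₁ m₂, rfl, h13n⟩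
        _ = max (m₁ : ℕ∞) (m₂ : ℕ∞) := by push_cast; rfl
        _ = max (distRep U ρ₁ ρ₂) (distRep U ρ₂ ρ₃) := by rw [hd12, hd23]
    · have : distRep U ρ₂ ρ₃ = ⊤ := by
        rw [distRep, sInf_eq_top]
        rintro a ⟨m, rfl, hm⟩
        exact absurd ⟨m, hm⟩ hS23
      rw [this]
      exact le_trans le_top (le_max_right _ _)
  · have : distRep U ρ₁ ρ₂ = ⊤ := by
      rw [distRep, sInf_eq_top]
      rintro a ⟨m, rfl, hm⟩
      exact absurd ⟨m, hm⟩ hS12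
    rw [this]
    exact le_trans le_top (le_max_left _ _)
end

section
/- Let G be a group, N a normal subgroup of G, and let π₁, π₂ be irreducible finite-dimensional complex representations of G. Then dim Hom_N(π₁, π₂) = dim Hom_N(π₂, π₁). -/
variable {G : Type*} [Group G]

open Module

section HomDim

universe u₁ u₂ u₃ u₄

variable {k : Type*} {A : Type*} [Field k] [Ring A] [Algebra k A]

/-- Congruence of hom-spaces along `A`-linear equivalences, as a `k`-linear equivalence. -/
@[simps] def homCongr
    {M₁ : Type u₁} {M₂ : Type u₂} {N₁ : Type u₃} {N₂ : Type u₄}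
    [AddCommGroup M₁] [Module k M₁] [Module A M₁] [IsScalarTower k A M₁]
    [AddCommGroup M₂] [Module k M₂] [Module A M₂] [IsScalarTower k A M₂]
    [AddCommGroup N₁] [Module k N₁] [Module A N₁] [IsScalarTower k A N₁]
    [AddCommGroup N₂] [Module k N₂] [Module A N₂] [IsScalarTower k A N₂]
    (e₁ : M₁ ≃ₗ[A] M₂) (e₂ : N₁ ≃ₗ[A] N₂) :
    (M₁ →ₗ[A] N₁) ≃ₗ[k] (M₂ →ₗ[A] N₂) where
  toFun f := (e₂ : N₁ →ₗ[A] N₂) ∘ₗ f ∘ₗ (e₁.symm : M₂ →ₗ[A] M₁)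
  invFun g := (e₂.symm : N₂ →ₗ[A] N₁) ∘ₗ g ∘ₗ (e₁ : M₁ →ₗ[A] M₂)
  map_add' f g := by ext x; simp
  map_smul' c f := by
    ext x
    simp only [LinearMap.smul_apply, LinearMap.coe_comp, LinearEquiv.coe_coe,
      Function.comp_apply, RingHom.id_apply]
    rw [← algebraMap_smul A c (f (e₁.symm x)), map_smul, algebraMap_smul]
  left_inv f := by ext x; simp
  right_inv g := by ext x; simp

variable {M : Type u₁} {N : Type u₂}
    [AddCommGroup M] [Module k M] [Module A M] [IsScalarTower k A M]
    [AddCommGroup N] [Module k N] [Module A N] [IsScalarTower k A N]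

instance homFD [FiniteDimensional k M] [FiniteDimensional k N] :
    FiniteDimensional k (M →ₗ[A] N) :=
  FiniteDimensional.of_injective (LinearMap.restrictScalarsₗ k A M N k)
    (LinearMap.restrictScalars_injective k)


lemma IsSimpleModule.isSemisimpleModule' {R M : Type*} [Ring R] [AddCommGroup M] [Module R M]
    [IsSimpleModule R M] : IsSemisimpleModule R M := by
  constructor

lemma finrank_hom_subsingleton_left [Subsingleton M] :
    Module.finrank k (M →ₗ[A] N) = 0 ∧ Module.finrank k (N →ₗ[A] M) = 0 := by
  constructor
  · haveI : Subsingleton (M →ₗ[A] N) :=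
      ⟨fun f g => by ext x; rw [Subsingleton.elim x 0]; simp⟩
    exact Module.finrank_zero_of_subsingleton
  · haveI : Subsingleton (N →ₗ[A] M) :=
      ⟨fun f g => by ext x; exact Subsingleton.elim _ _⟩
    exact Module.finrank_zero_of_subsingleton

lemma finrank_hom_simple_simple [IsSimpleModule A M] [IsSimpleModule A N] :
    Module.finrank k (M →ₗ[A] N) = Module.finrank k (N →ₗ[A] M) := by
  by_cases h : Nonempty (M ≃ₗ[A] N)
  · obtain ⟨e⟩ := h
    exact (homCongr (k := k) e e.symm).finrank_eq
  · have hz : ∀ f : M →ₗ[A] N, f = 0 := by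
      intro f
      by_contra hf
      exact h ⟨LinearEquiv.ofBijective f (f.bijective_of_ne_zero hf)⟩
    have hz' : ∀ f : N →ₗ[A] M, f = 0 := by
      intro f
      by_contra hf
      exact h ⟨(LinearEquiv.ofBijective f (f.bijective_of_ne_zero hf)).symm⟩
    haveI : Subsingleton (M →ₗ[A] N) := ⟨fun a b => by rw [hz a, hz b]⟩
    haveI : Subsingleton (N →ₗ[A] M) := ⟨fun a b => by rw [hz' a, hz' b]⟩
    rw [Module.finrank_zero_of_subsingleton, Module.finrank_zero_of_subsingleton]


lemma finrank_hom_simple_left [IsSimpleModule A M] [FiniteDimensional k M] :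
    ∀ (n : ℕ) (N : Type u₂) [AddCommGroup N] [Module k N] [Module A N] [IsScalarTower k A N]
      [FiniteDimensional k N] [IsSemisimpleModule A N], Module.finrank k N = n →
      Module.finrank k (M →ₗ[A] N) = Module.finrank k (N →ₗ[A] M) := by
  intro n
  induction n using Nat.strong_induction_on with
  | _ n ih =>
    intro N _ _ _ _ _ _ hn
    rcases subsingleton_or_nontrivial N with hN | hN
    · obtain ⟨h1, h2⟩ := finrank_hom_subsingleton_left (k := k) (A := A) (M := N) (N := M)
      rw [h1, h2]
    · obtain ⟨S, hS⟩ := IsSemisimpleModule.exists_simple_submodule A N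
      haveI : IsSimpleModule A S := hS
      obtain ⟨p, hp⟩ := exists_isCompl S
      let e : (S × p) ≃ₗ[A] N := Submodule.prodEquivOfIsCompl S p hp
      haveI : FiniteDimensional k S :=
        FiniteDimensional.of_injective ((S.subtype).restrictScalars k) Subtype.val_injective
      haveI : FiniteDimensional k p :=
        FiniteDimensional.of_injective ((p.subtype).restrictScalars k) Subtype.val_injective
      have hdim : Module.finrank k S + Module.finrank k p = n := by
        rw [← hn, ← (e.restrictScalars k).finrank_eq, Module.finrank_prod]
      haveI : Nontrivial S := IsSimpleModule.nontrivial A S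
      have hSpos : 0 < Module.finrank k S := Module.finrank_pos
      have hplt : Module.finrank k p < n := by omega
      calc Module.finrank k (M →ₗ[A] N)
          = Module.finrank k (M →ₗ[A] S × p) :=
            (homCongr (k := k) (LinearEquiv.refl A M) e.symm).finrank_eq
        _ = Module.finrank k ((M →ₗ[A] S) × (M →ₗ[A] p)) :=
            (LinearMap.prodEquiv (S := k)).symm.finrank_eq
        _ = Module.finrank k (M →ₗ[A] S) + Module.finrank k (M →ₗ[A] p) :=
            Module.finrank_prod
        _ = Module.finrank k (S →ₗ[A] M) + Module.finrank k (p →ₗ[A] M) := by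
            rw [finrank_hom_simple_simple (k := k), ih _ hplt p rfl]
        _ = Module.finrank k ((S →ₗ[A] M) × (p →ₗ[A] M)) := Module.finrank_prod.symm
        _ = Module.finrank k (S × p →ₗ[A] M) :=
            (LinearMap.coprodEquiv (S := k)).finrank_eq
        _ = Module.finrank k (N →ₗ[A] M) :=
            (homCongr (k := k) e (LinearEquiv.refl A M)).finrank_eq

lemma finrank_hom_symm_aux :
    ∀ (n : ℕ) (M : Type u₁) [AddCommGroup M] [Module k M] [Module A M] [IsScalarTower k A M]
      [FiniteDimensional k M] [IsSemisimpleModule A M], Module.finrank k M = n →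
      ∀ (N : Type u₂) [AddCommGroup N] [Module k N] [Module A N] [IsScalarTower k A N]
      [FiniteDimensional k N] [IsSemisimpleModule A N],
      Module.finrank k (M →ₗ[A] N) = Module.finrank k (N →ₗ[A] M) := by
  intro n
  induction n using Nat.strong_induction_on with
  | _ n ih =>
    intro M _ _ _ _ _ _ hn N _ _ _ _ _ _
    rcases subsingleton_or_nontrivial M with hM | hM
    · obtain ⟨h1, h2⟩ := finrank_hom_subsingleton_left (k := k) (A := A) (M := M) (N := N)
      rw [h1, h2]
    · obtain ⟨S, hS⟩ := IsSemisimpleModule.exists_simple_submodule A M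
      haveI : IsSimpleModule A S := hS
      obtain ⟨p, hp⟩ := exists_isCompl S
      let e : (S × p) ≃ₗ[A] M := Submodule.prodEquivOfIsCompl S p hp
      haveI : FiniteDimensional k S :=
        FiniteDimensional.of_injective ((S.subtype).restrictScalars k) Subtype.val_injective
      haveI : FiniteDimensional k p :=
        FiniteDimensional.of_injective ((p.subtype).restrictScalars k) Subtype.val_injective
      have hdim : Module.finrank k S + Module.finrank k p = n := by
        rw [← hn, ← (e.restrictScalars k).finrank_eq, Module.finrank_prod]
      haveI : Nontrivial S := IsSimpleModule.nontrivial A S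
      have hSpos : 0 < Module.finrank k S := Module.finrank_pos
      have hplt : Module.finrank k p < n := by omega
      calc Module.finrank k (M →ₗ[A] N)
          = Module.finrank k (S × p →ₗ[A] N) :=
            (homCongr (k := k) e (LinearEquiv.refl A N)).finrank_eq.symm
        _ = Module.finrank k ((S →ₗ[A] N) × (p →ₗ[A] N)) :=
            (LinearMap.coprodEquiv (S := k)).finrank_eq.symm
        _ = Module.finrank k (S →ₗ[A] N) + Module.finrank k (p →ₗ[A] N) :=
            Module.finrank_prod
        _ = Module.finrank k (N →ₗ[A] S) + Module.finrank k (N →ₗ[A] p) := by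
            rw [finrank_hom_simple_left (k := k) (M := S) (Module.finrank k N) N rfl,
              ih _ hplt p rfl N]
        _ = Module.finrank k ((N →ₗ[A] S) × (N →ₗ[A] p)) := Module.finrank_prod.symm
        _ = Module.finrank k (N →ₗ[A] S × p) :=
            (LinearMap.prodEquiv (S := k)).finrank_eq
        _ = Module.finrank k (N →ₗ[A] M) :=
            (homCongr (k := k) (LinearEquiv.refl A N) e).finrank_eq

theorem finrank_hom_symm [FiniteDimensional k M] [FiniteDimensional k N]
    [IsSemisimpleModule A M] [IsSemisimpleModule A N] :
    Module.finrank k (M →ₗ[A] N) = Module.finrank k (N →ₗ[A] M) :=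
  finrank_hom_symm_aux (Module.finrank k M) M rfl N

end HomDim

section RepSS

variable (N : Subgroup G)
variable {V : Type*} [AddCommGroup V] [Module ℂ V]

/-- A representation of `G` restricted to a subgroup `N`. -/
noncomputable abbrev resRep (ρ : Representation ℂ G V) : Representation ℂ N V :=
  ρ.comp N.subtype

lemma asModule_smul (ρ : Representation ℂ G V) (a : MonoidAlgebra ℂ N)
    (v : (resRep N ρ).asModule) : a • v = (resRep N ρ).asAlgebraHom a v := rfl

instance resRep_tower (ρ : Representation ℂ G V) :
    IsScalarTower ℂ (MonoidAlgebra ℂ N) (resRep N ρ).asModule :=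
  ⟨fun c a v => by
    rw [asModule_smul, asModule_smul, map_smul]; rfl⟩

instance resRep_fd (ρ : Representation ℂ G V) [FiniteDimensional ℂ V] :
    FiniteDimensional ℂ (resRep N ρ).asModule :=
  inferInstanceAs (FiniteDimensional ℂ V)

/-- Turn an `N`-stable complex subspace into a submodule over the monoid algebra. -/
noncomputable def toASub (ρ : Representation ℂ G V) (W : Submodule ℂ V)
    (hW : ∀ (n : N) (v : V), v ∈ W → ρ (n : G) v ∈ W) :
    Submodule (MonoidAlgebra ℂ N) (resRep N ρ).asModule where
  carrier := W.carrier
  add_mem' := W.add_mem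
  zero_mem' := W.zero_mem
  smul_mem' := by
    intro a v hv
    show (resRep N ρ).asAlgebraHom a v ∈ W
    induction a using MonoidAlgebra.induction with
    | zero => erw [map_zero, LinearMap.zero_apply]; exact W.zero_mem
    | single_add n c b _ _ ih =>
      erw [map_add, LinearMap.add_apply]
      refine W.add_mem ?_ ih
      erw [Representation.asAlgebraHom_single, LinearMap.smul_apply]
      exact W.smul_mem c (hW n v hv)

lemma restrictScalars_toASub (ρ : Representation ℂ G V) (W : Submodule ℂ V)
    (hW : ∀ (n : N) (v : V), v ∈ W → ρ (n : G) v ∈ W) :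
    (toASub N ρ W hW).restrictScalars ℂ = W := by
  ext x; exact ⟨fun h => h, fun h => h⟩

lemma rho_mem_of_mem (ρ : Representation ℂ G V)
    (p : Submodule (MonoidAlgebra ℂ N) (resRep N ρ).asModule) (m : N)
    {w : (resRep N ρ).asModule} (hw : w ∈ p) : ρ (m : G) w ∈ p := by
  have h := p.smul_mem (MonoidAlgebra.single m (1 : ℂ)) hw
  rw [asModule_smul, Representation.asAlgebraHom_single, one_smul] at h
  exact h


variable [N.Normal]

/-- Conjugate of an `N`-submodule by a group element. -/
noncomputable def conjSub (ρ : Representation ℂ G V) (g : G)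
    (p : Submodule (MonoidAlgebra ℂ N) (resRep N ρ).asModule) :
    Submodule (MonoidAlgebra ℂ N) (resRep N ρ).asModule :=
  toASub N ρ ((p.restrictScalars ℂ).map (ρ g)) (by
    rintro n v ⟨w, hw, rfl⟩
    refine ⟨ρ (g⁻¹ * (n : G) * g) w, ?_, ?_⟩
    · have hmem : g⁻¹ * (n : G) * g ∈ N := by
        simpa using Subgroup.Normal.conj_mem ‹N.Normal› (n : G) n.2 g⁻¹
      exact rho_mem_of_mem N ρ p ⟨g⁻¹ * (n : G) * g, hmem⟩ hw
    · have e1 : ρ (g * (g⁻¹ * (n : G) * g)) w = ρ g (ρ (g⁻¹ * (n : G) * g) w) := by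
        rw [map_mul]; rfl
      have e2 : ρ ((n : G) * g) w = ρ (n : G) (ρ g w) := by
        rw [map_mul]; rfl
      have e3 : g * (g⁻¹ * (n : G) * g) = (n : G) * g := by group
      exact e1.symm.trans ((by rw [e3] : ρ (g * (g⁻¹ * (n : G) * g)) w = ρ ((n : G) * g) w).trans e2))

lemma restrictScalars_conjSub (ρ : Representation ℂ G V) (g : G)
    (p : Submodule (MonoidAlgebra ℂ N) (resRep N ρ).asModule) :
    (conjSub N ρ g p).restrictScalars ℂ = (p.restrictScalars ℂ).map (ρ g) :=
  restrictScalars_toASub _ _ _ _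

lemma conjSub_conjSub (ρ : Representation ℂ G V) (g g' : G)
    (p : Submodule (MonoidAlgebra ℂ N) (resRep N ρ).asModule) :
    conjSub N ρ g (conjSub N ρ g' p) = conjSub N ρ (g * g') p := by
  apply Submodule.restrictScalars_injective ℂ
  rw [restrictScalars_conjSub, restrictScalars_conjSub, restrictScalars_conjSub]
  erw [← Submodule.map_comp]
  congr 1
  ext v
  show ρ g (ρ g' v) = ρ (g * g') v
  rw [map_mul]
  rfl

lemma conjSub_one (ρ : Representation ℂ G V)
    (p : Submodule (MonoidAlgebra ℂ N) (resRep N ρ).asModule) :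
    conjSub N ρ 1 p = p := by
  apply Submodule.restrictScalars_injective ℂ
  rw [restrictScalars_conjSub, map_one, Module.End.one_eq_id]
  erw [Submodule.map_id]

lemma conjSub_bot (ρ : Representation ℂ G V) (g : G) :
    conjSub N ρ g (⊥ : Submodule (MonoidAlgebra ℂ N) (resRep N ρ).asModule) = ⊥ := by
  apply Submodule.restrictScalars_injective ℂ
  rw [restrictScalars_conjSub, Submodule.restrictScalars_bot]
  erw [Submodule.map_bot]
  rfl

lemma conjSub_mono (ρ : Representation ℂ G V) (g : G)
    {p q : Submodule (MonoidAlgebra ℂ N) (resRep N ρ).asModule} (h : p ≤ q) :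
    conjSub N ρ g p ≤ conjSub N ρ g q := by
  rintro x ⟨w, hw, rfl⟩
  exact ⟨w, h hw, rfl⟩

lemma conjSub_isAtom (ρ : Representation ℂ G V) (g : G)
    {p : Submodule (MonoidAlgebra ℂ N) (resRep N ρ).asModule} (hp : IsAtom p) :
    IsAtom (conjSub N ρ g p) := by
  constructor
  · intro hbot
    apply hp.1
    have h := congrArg (conjSub N ρ g⁻¹) hbot
    rwa [conjSub_conjSub, inv_mul_cancel, conjSub_one, conjSub_bot] at h
  · intro q hq
    have h1 : conjSub N ρ g⁻¹ q ≤ p := by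
      have h2 := conjSub_mono N ρ g⁻¹ (le_of_lt hq)
      rwa [conjSub_conjSub, inv_mul_cancel, conjSub_one] at h2
    rcases lt_or_eq_of_le h1 with hlt | heq
    · have h3 := congrArg (conjSub N ρ g) (hp.2 _ hlt)
      rwa [conjSub_conjSub, mul_inv_cancel, conjSub_one, conjSub_bot] at h3
    · exfalso
      apply hq.ne
      have h4 := congrArg (conjSub N ρ g) heq
      rwa [conjSub_conjSub, mul_inv_cancel, conjSub_one] at h4


theorem resRep_isSemisimple (ρ : Representation ℂ G V) [FiniteDimensional ℂ V]
    (h : IsIrrep ρ) :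
    IsSemisimpleModule (MonoidAlgebra ℂ N) (resRep N ρ).asModule := by
  haveI : Nontrivial (resRep N ρ).asModule := h.1
  haveI hart : IsArtinian (MonoidAlgebra ℂ N) (resRep N ρ).asModule :=
    isArtinian_of_tower ℂ inferInstance
  haveI : IsAtomic (Submodule (MonoidAlgebra ℂ N) (resRep N ρ).asModule) :=
    isAtomic_of_orderBot_wellFounded_lt wellFounded_lt
  rcases IsAtomic.eq_bot_or_exists_atom_le
      (⊤ : Submodule (MonoidAlgebra ℂ N) (resRep N ρ).asModule) with htop | ⟨p, hp, -⟩
  · exfalso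
    obtain ⟨v, hv⟩ := exists_ne (0 : (resRep N ρ).asModule)
    have hmem : v ∈ (⊥ : Submodule (MonoidAlgebra ℂ N) (resRep N ρ).asModule) :=
      htop ▸ Submodule.mem_top
    exact hv (by simpa using hmem)
  · apply isSemisimpleModule_of_isSemisimpleModule_submodule'
      (p := fun g : G => conjSub N ρ g p)
    · intro g
      haveI : IsSimpleModule (MonoidAlgebra ℂ N) (conjSub N ρ g p) :=
        isSimpleModule_iff_isAtom.mpr (conjSub_isAtom N ρ g hp)
      exact IsSimpleModule.isSemisimpleModule'
    · set pr := p.restrictScalars ℂ with hpr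
      have hstab : ∀ g : G, ∀ v ∈ (⨆ g' : G, pr.map (ρ g')), ρ g v ∈ (⨆ g' : G, pr.map (ρ g')) := by
        intro g v hv
        have hmap : Submodule.map (ρ g) (⨆ g' : G, pr.map (ρ g')) ≤ ⨆ g' : G, pr.map (ρ g') := by
          rw [Submodule.map_iSup]
          refine iSup_le fun g' => ?_
          erw [← Submodule.map_comp]
          have hcomp : (ρ g) ∘ₗ (ρ g') = ρ (g * g') := by
            ext w; show ρ g (ρ g' w) = _; rw [map_mul]; rfl
          rw [hcomp]
          exact le_iSup (fun g'' : G => pr.map (ρ g'')) (g * g')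
        exact hmap (Submodule.mem_map_of_mem hv)
      rcases h.2 _ hstab with hbot | htop2
      · exfalso
        have hle : pr ≤ ⨆ g' : G, pr.map (ρ g') := by
          have hone : pr.map (ρ 1) = pr := by
            rw [map_one, Module.End.one_eq_id]
            erw [Submodule.map_id]
          exact le_trans (le_of_eq hone.symm) (le_iSup (fun g'' : G => pr.map (ρ g'')) 1)
        rw [hbot] at hle
        refine hp.1 ?_
        rw [← Submodule.restrictScalars_eq_bot_iff (S := ℂ)]
        exact le_bot_iff.mp hle
      · apply Submodule.restrictScalars_injective ℂ
        rw [Submodule.restrictScalars_top, eq_top_iff]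
        erw [← htop2]
        refine iSup_le fun g => ?_
        intro x hx
        have h1 : x ∈ conjSub N ρ g p := by
          have h2 : x ∈ (conjSub N ρ g p).restrictScalars ℂ := by
            rw [restrictScalars_conjSub]; exact hx
          exact h2
        exact (le_iSup (fun g' : G => conjSub N ρ g' p) g) h1


noncomputable def homSpaceEquiv {V₁ V₂ : Type*} [AddCommGroup V₁] [Module ℂ V₁]
    [AddCommGroup V₂] [Module ℂ V₂]
    (ρ₁ : Representation ℂ G V₁) (ρ₂ : Representation ℂ G V₂) :
    (homSpace N ρ₁ ρ₂) ≃ₗ[ℂ]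
      ((resRep N ρ₁).asModule →ₗ[MonoidAlgebra ℂ N] (resRep N ρ₂).asModule) where
  toFun f :=
    { toFun := f.1
      map_add' := f.1.map_add
      map_smul' := by
        intro a v
        show f.1 ((resRep N ρ₁).asAlgebraHom a v) = (resRep N ρ₂).asAlgebraHom a (f.1 v)
        induction a using MonoidAlgebra.induction with
        | zero => simp; erw [LinearMap.zero_apply, map_zero]
        | single_add n c b _ _ ih =>
          erw [map_add, map_add]
          erw [map_add, LinearMap.add_apply, ih]
          congr 1
          rw [Representation.asAlgebraHom_single, Representation.asAlgebraHom_single,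
            LinearMap.smul_apply]
          erw [LinearMap.smul_apply, map_smul]
          congr 1
          exact f.2 (n : G) n.2 v }
  map_add' f g := rfl
  map_smul' c f := rfl
  invFun F :=
    ⟨{ toFun := F
       map_add' := F.map_add
       map_smul' := by
         intro c v
         show F (c • v) = c • F v
         have hv := F.map_smul (algebraMap ℂ (MonoidAlgebra ℂ N) c) v
         erw [algebraMap_smul, algebraMap_smul] at hv
         exact hv },
      by
        intro h hh v
        have hs := F.map_smul (MonoidAlgebra.single (⟨h, hh⟩ : N) (1 : ℂ)) v
        erw [asModule_smul, asModule_smul, Representation.asAlgebraHom_single,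
          Representation.asAlgebraHom_single, one_smul, one_smul] at hs
        exact hs⟩
  left_inv f := rfl
  right_inv F := rfl

end RepSS



/-- `dim Hom_N(π₁, π₂) = dim Hom_N(π₂, π₁)`. -/
theorem stmt4 {V₁ V₂ : Type*} [AddCommGroup V₁] [Module ℂ V₁] [FiniteDimensional ℂ V₁]
    [AddCommGroup V₂] [Module ℂ V₂] [FiniteDimensional ℂ V₂]
    (N : Subgroup G) [N.Normal]
    (ρ₁ : Representation ℂ G V₁) (ρ₂ : Representation ℂ G V₂)
    (h₁ : IsIrrep ρ₁) (h₂ : IsIrrep ρ₂) :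
    Module.finrank ℂ (homSpace N ρ₁ ρ₂) = Module.finrank ℂ (homSpace N ρ₂ ρ₁) := by
  haveI := resRep_isSemisimple N ρ₁ h₁
  haveI := resRep_isSemisimple N ρ₂ h₂
  rw [(homSpaceEquiv N ρ₁ ρ₂).finrank_eq, (homSpaceEquiv N ρ₂ ρ₁).finrank_eq]
  exact finrank_hom_symm
end

section
/- Let G be a group and N a normal subgroup of G such that the quotient group G/N is infinite cyclic. Let π₁, π₂ be irreducible finite-dimensional complex representations of G. Then Hom_N(π₁, π₂) ≠ 0 if and only if there exists a group homomorphism ω : G → ℂ* which is trivial on N such that π₂ is isomorphic to the twist π₁ ⊗ ω (i.e., the representation g ↦ ω(g)·π₁(g)). -/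
variable {G : Type*} [Group G]

lemma mem_homSpace {H : Subgroup G} {V₁ V₂ : Type*} [AddCommGroup V₁] [Module ℂ V₁]
    [AddCommGroup V₂] [Module ℂ V₂] {ρ₁ : Representation ℂ G V₁}
    {ρ₂ : Representation ℂ G V₂} {f : V₁ →ₗ[ℂ] V₂} :
    f ∈ homSpace H ρ₁ ρ₂ ↔ ∀ h ∈ H, ∀ v, f (ρ₁ h v) = ρ₂ h (f v) := Iff.rfl

lemma rep_comp {V : Type*} [AddCommGroup V] [Module ℂ V] (ρ : Representation ℂ G V)
    (a b : G) (v : V) : ρ a (ρ b v) = ρ (a * b) v := by rw [map_mul]; rfl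

/-- The set of `g` for which `f` intertwines the `ω`-twist of `ρ₁` with `ρ₂` is a subgroup. -/
def twistSub {V₁ V₂ : Type*} [AddCommGroup V₁] [Module ℂ V₁]
    [AddCommGroup V₂] [Module ℂ V₂] (ρ₁ : Representation ℂ G V₁)
    (ρ₂ : Representation ℂ G V₂) (ω : G →* ℂˣ) (f : V₁ →ₗ[ℂ] V₂) : Subgroup G where
  carrier := {g | ∀ v, f ((ω g : ℂ) • ρ₁ g v) = ρ₂ g (f v)}
  one_mem' := by intro v; simp
  mul_mem' := by
    intro g h hg hh v
    have h1 : ((ω (g * h) : ℂ) • ρ₁ (g * h) v) = (ω g : ℂ) • ρ₁ g ((ω h : ℂ) • ρ₁ h v) := by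
      rw [map_smul, ← rep_comp ρ₁ g h v, map_mul, Units.val_mul, smul_smul]
    rw [h1, hg, hh, rep_comp ρ₂]
  inv_mem' := by
    intro g hg v
    have key : ∀ w, f (ρ₁ g⁻¹ w) = (ω g : ℂ) • ρ₂ g⁻¹ (f w) := by
      intro w
      have h1 := hg (ρ₁ g⁻¹ w)
      rw [rep_comp ρ₁, mul_inv_cancel, map_one, Module.End.one_apply, map_smul] at h1
      have h2 := congrArg (ρ₂ g⁻¹) h1
      rw [rep_comp ρ₂, inv_mul_cancel, map_one, Module.End.one_apply, map_smul] at h2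
      exact h2.symm
    rw [map_smul, key, smul_smul, map_inv]
    norm_num

/-- if `G/N` is infinite cyclic then `Hom_N(π₁, π₂) ≠ 0` iff `π₂` is a twist of
`π₁` by a character of `G` trivial on `N`. -/
theorem stmt8 {V₁ V₂ : Type*} [AddCommGroup V₁] [Module ℂ V₁] [FiniteDimensional ℂ V₁]
    [AddCommGroup V₂] [Module ℂ V₂] [FiniteDimensional ℂ V₂]
    (N : Subgroup G) [N.Normal] [IsCyclic (G ⧸ N)] [Infinite (G ⧸ N)]
    (ρ₁ : Representation ℂ G V₁) (ρ₂ : Representation ℂ G V₂)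
    (h₁ : IsIrrep ρ₁) (h₂ : IsIrrep ρ₂) :
    homSpace N ρ₁ ρ₂ ≠ ⊥ ↔
      ∃ ω : G →* ℂˣ, (∀ n ∈ N, ω n = 1) ∧
        ∃ e : V₁ ≃ₗ[ℂ] V₂, ∀ g : G, ∀ v : V₁,
          e ((ω g : ℂ) • ρ₁ g v) = ρ₂ g (e v) := by
  constructor
  · intro hne
    -- generator of the quotient and a lift
    obtain ⟨q, hq⟩ := IsCyclic.exists_generator (α := G ⧸ N)
    obtain ⟨g₀, hg₀⟩ := QuotientGroup.mk'_surjective N q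
    -- q has infinite order
    have hord : ¬ IsOfFinOrder q := by
      intro h
      have hfin : (Subgroup.zpowers q : Set (G ⧸ N)).Finite := h.finite_zpowers
      have huniv : (Set.univ : Set (G ⧸ N)).Finite := by
        refine hfin.subset ?_
        intro x _
        exact hq x
      exact Set.infinite_univ huniv
    -- the quotient is ℤ
    have hbij : Function.Bijective (zpowersHom (G ⧸ N) q) := by
      constructor
      · intro a b hab
        have hinj := injective_zpow_iff_not_isOfFinOrder.2 hord
        have : q ^ a.toAdd = q ^ b.toAdd := hab
        exact Multiplicative.toAdd.injective (hinj this)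
      · intro x
        obtain ⟨k, hk⟩ := Subgroup.mem_zpowers_iff.1 (hq x)
        exact ⟨Multiplicative.ofAdd k, hk⟩
    let E : Multiplicative ℤ ≃* (G ⧸ N) := MulEquiv.ofBijective _ hbij
    -- operator on the hom space
    have hΦmem : ∀ f ∈ homSpace N ρ₁ ρ₂,
        ρ₂ g₀ ∘ₗ (f ∘ₗ ρ₁ g₀⁻¹) ∈ homSpace N ρ₁ ρ₂ := by
      intro f hf h hh v
      have hc : g₀⁻¹ * h * g₀ ∈ N := by
        simpa using Subgroup.Normal.conj_mem ‹N.Normal› h hh g₀⁻¹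
      show ρ₂ g₀ (f (ρ₁ g₀⁻¹ (ρ₁ h v))) = ρ₂ h (ρ₂ g₀ (f (ρ₁ g₀⁻¹ v)))
      calc ρ₂ g₀ (f (ρ₁ g₀⁻¹ (ρ₁ h v)))
          = ρ₂ g₀ (f (ρ₁ (g₀⁻¹ * h * g₀) (ρ₁ g₀⁻¹ v))) := by
            rw [rep_comp ρ₁, rep_comp ρ₁, show g₀⁻¹ * h * g₀ * g₀⁻¹ = g₀⁻¹ * h by group]
        _ = ρ₂ g₀ (ρ₂ (g₀⁻¹ * h * g₀) (f (ρ₁ g₀⁻¹ v))) := by rw [hf _ hc]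
        _ = ρ₂ h (ρ₂ g₀ (f (ρ₁ g₀⁻¹ v))) := by
            rw [rep_comp ρ₂, rep_comp ρ₂, show g₀ * (g₀⁻¹ * h * g₀) = h * g₀ by group]
    let A : Module.End ℂ (homSpace N ρ₁ ρ₂) :=
      { toFun := fun f => ⟨ρ₂ g₀ ∘ₗ ((f : V₁ →ₗ[ℂ] V₂) ∘ₗ ρ₁ g₀⁻¹), hΦmem _ f.2⟩
        map_add' := by intro f g; ext v; simp
        map_smul' := by intro c f; ext v; simp }
    have : Nontrivial (homSpace N ρ₁ ρ₂) := Submodule.nontrivial_iff_ne_bot.2 hne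
    obtain ⟨μ, hμ⟩ := Module.End.exists_eigenvalue A
    obtain ⟨f, hf⟩ := hμ.exists_hasEigenvector
    have hfne : (f : V₁ →ₗ[ℂ] V₂) ≠ 0 := by
      intro h0
      exact hf.right (Subtype.ext h0)
    -- key eigen relation
    have hkey : ∀ v, ρ₂ g₀ ((f : V₁ →ₗ[ℂ] V₂) (ρ₁ g₀⁻¹ v)) = μ • (f : V₁ →ₗ[ℂ] V₂) v := by
      intro v
      have := hf.apply_eq_smul
      have h2 : ((A f : homSpace N ρ₁ ρ₂) : V₁ →ₗ[ℂ] V₂) v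
          = ((μ • f : homSpace N ρ₁ ρ₂) : V₁ →ₗ[ℂ] V₂) v := by rw [this]
      simpa [A] using h2
    -- μ ≠ 0
    have hμ0 : μ ≠ 0 := by
      intro h0
      apply hfne
      ext v
      have h3 := hkey (ρ₁ g₀ v)
      rw [rep_comp ρ₁, inv_mul_cancel, map_one, Module.End.one_apply, h0, zero_smul] at h3
      have h4 := congrArg (ρ₂ g₀⁻¹) h3
      rw [rep_comp ρ₂, inv_mul_cancel, map_one, Module.End.one_apply, map_zero] at h4
      simpa using h4
    set lu : ℂˣ := Units.mk0 μ hμ0 with hlu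
    -- the character
    let ω : G →* ℂˣ :=
      ((zpowersHom ℂˣ lu).comp E.symm.toMonoidHom).comp (QuotientGroup.mk' N)
    have hωN : ∀ n ∈ N, ω n = 1 := by
      intro n hn
      have h1 : QuotientGroup.mk' N n = 1 := (QuotientGroup.eq_one_iff n).2 hn
      show zpowersHom ℂˣ lu (E.symm (QuotientGroup.mk' N n)) = 1
      rw [h1, map_one, map_one]
    have hEsymm : E.symm q = Multiplicative.ofAdd 1 := by
      have hE1 : E (Multiplicative.ofAdd 1) = q := by
        show zpowersHom (G ⧸ N) q (Multiplicative.ofAdd 1) = q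
        simp
      rw [← hE1, MulEquiv.symm_apply_apply]
    have hωg₀ : ω g₀ = lu := by
      show zpowersHom ℂˣ lu (E.symm (QuotientGroup.mk' N g₀)) = lu
      rw [hg₀, hEsymm]
      simp
    -- g₀ is in the twist subgroup
    have hg₀S : g₀ ∈ twistSub ρ₁ ρ₂ ω f := by
      intro v
      have h3 := hkey (ρ₁ g₀ v)
      rw [rep_comp ρ₁, inv_mul_cancel, map_one, Module.End.one_apply] at h3
      rw [hωg₀, map_smul]
      show μ • (f : V₁ →ₗ[ℂ] V₂) (ρ₁ g₀ v) = ρ₂ g₀ ((f : V₁ →ₗ[ℂ] V₂) v)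
      exact h3.symm
    have hNS : ∀ n ∈ N, n ∈ twistSub ρ₁ ρ₂ ω f := by
      intro n hn v
      rw [hωN n hn, Units.val_one, one_smul]
      exact f.2 n hn v
    -- all of G is in the twist subgroup
    have hall : ∀ g : G, ∀ v, (f : V₁ →ₗ[ℂ] V₂) ((ω g : ℂ) • ρ₁ g v)
        = ρ₂ g ((f : V₁ →ₗ[ℂ] V₂) v) := by
      intro g
      obtain ⟨k, hk⟩ := Subgroup.mem_zpowers_iff.1 (hq (QuotientGroup.mk' N g))
      have hmem : (g₀ ^ k)⁻¹ * g ∈ N := by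
        have hqk : (QuotientGroup.mk' N) (g₀ ^ k) = (QuotientGroup.mk' N) g := by
          rw [map_zpow, hg₀, hk]
        exact (QuotientGroup.leftRel_apply).1 (Quotient.exact' (hqk))
      have hmul : g₀ ^ k * ((g₀ ^ k)⁻¹ * g) ∈ twistSub ρ₁ ρ₂ ω f :=
        Subgroup.mul_mem _ (Subgroup.zpow_mem _ hg₀S k) (hNS _ hmem)
      rw [show g₀ ^ k * ((g₀ ^ k)⁻¹ * g) = g by group] at hmul
      exact hmul
    -- f is injective
    have hkerinv : ∀ g : G, ∀ v ∈ LinearMap.ker (f : V₁ →ₗ[ℂ] V₂),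
        ρ₁ g v ∈ LinearMap.ker (f : V₁ →ₗ[ℂ] V₂) := by
      intro g v hv
      rw [LinearMap.mem_ker] at hv ⊢
      have h5 := hall g v
      rw [hv, map_zero, map_smul] at h5
      exact (smul_eq_zero_iff_right (Units.ne_zero (ω g))).1 h5
    have hinj : Function.Injective (f : V₁ →ₗ[ℂ] V₂) := by
      rw [← LinearMap.ker_eq_bot]
      rcases h₁.2 (LinearMap.ker (f : V₁ →ₗ[ℂ] V₂)) hkerinv with h | h
      · exact h
      · exact absurd (LinearMap.ker_eq_top.1 h) hfne
    have hrinv : ∀ g : G, ∀ w ∈ LinearMap.range (f : V₁ →ₗ[ℂ] V₂),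
        ρ₂ g w ∈ LinearMap.range (f : V₁ →ₗ[ℂ] V₂) := by
      rintro g w ⟨v, rfl⟩
      exact ⟨(ω g : ℂ) • ρ₁ g v, hall g v⟩
    have hsurj : Function.Surjective (f : V₁ →ₗ[ℂ] V₂) := by
      rw [← LinearMap.range_eq_top]
      rcases h₂.2 (LinearMap.range (f : V₁ →ₗ[ℂ] V₂)) hrinv with h | h
      · exact absurd (LinearMap.range_eq_bot.1 h) hfne
      · exact h
    refine ⟨ω, hωN, LinearEquiv.ofBijective (f : V₁ →ₗ[ℂ] V₂) ⟨hinj, hsurj⟩, ?_⟩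
    intro g v
    exact hall g v
  · rintro ⟨ω, hω, e, he⟩
    rw [Submodule.ne_bot_iff]
    refine ⟨e.toLinearMap, ?_, ?_⟩
    · intro h hh v
      have : e ((ω h : ℂ) • ρ₁ h v) = ρ₂ h (e v) := he h v
      rwa [hω h hh, Units.val_one, one_smul] at this
    · haveI := h₁.1
      obtain ⟨v, hv⟩ := exists_ne (0 : V₁)
      intro h0
      have : e v = 0 := by
        have h1 := DFunLike.congr_fun h0 v
        simpa using h1
      exact hv (e.map_eq_zero_iff.mp this)
end
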